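/- arXiv:1905.00951 — 2 statements merged into one kernel-verified Lean document; each statement's English description precedes it below -/
import Mathlib

section
/- Let G be a group. An element α ∈ ℂG is an analytical zero divisor if and only if α*α is an analytical zero divisor. -/
open scoped ENNReal InnerProductSpace

/-- The adjoint `α* = ∑ conj(a_g)·g⁻¹` of an element of the complex group algebra. -/
noncomputable def MonoidAlgebra.adj {G : Type*} [Group G] (α : MonoidAlgebra ℂ G) :
    MonoidAlgebra ℂ G :=
  MonoidAlgebra.ofCoeff
    (Finsupp.mapRange (starRingEnd ℂ) (map_zero _) (Finsupp.equivMapDomain (Equiv.inv G) α.coeff))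

/-- The product of `α ∈ ℂG` with `β ∈ ℓ²(G)`, defined pointwise by the finite sum
`(αβ)(x) = ∑_{g ∈ supp α} α(g)·β(g⁻¹x)`. -/
noncomputable def smulL2 {G : Type*} [Group G] (α : MonoidAlgebra ℂ G)
    (β : lp (fun _ : G => ℂ) 2) : G → ℂ :=
  fun x => ∑ g ∈ α.coeff.support, α.coeff g * β (g⁻¹ * x)

/-- `Υ(α) = a_1 − ∑_{g ≠ 1} |a_g|` (for self-adjoint `α`, `a_1` is real, so we take
the real part). -/
noncomputable def Upsilon {G : Type*} [Group G] [DecidableEq G] (α : MonoidAlgebra ℂ G) : ℝ :=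
  (α.coeff 1).re - ∑ g ∈ α.coeff.support.erase 1, ‖α.coeff g‖

/-- A self-adjoint element of `ℂG` is golden if `Υ(α) ≥ 0`. -/
def IsGolden {G : Type*} [Group G] [DecidableEq G] (α : MonoidAlgebra ℂ G) : Prop :=
  MonoidAlgebra.adj α = α ∧ 0 ≤ Upsilon α

lemma translate_memℓp {G : Type*} [Group G] (g : G) (f : lp (fun _ : G => ℝ) ∞) :
    Memℓp (fun x => f (g⁻¹ * x)) ∞ := by
  have hf : Memℓp (fun x => f x) ∞ := f.2
  rw [memℓp_infty_iff] at hf ⊢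
  obtain ⟨C, hC⟩ := hf
  exact ⟨C, by rintro y ⟨x, rfl⟩; exact hC ⟨g⁻¹ * x, rfl⟩⟩

/-- A group is amenable if there is a left-invariant mean on `ℓ∞(G, ℝ)`: a linear
functional `m` with `m 1 = 1`, `m f ≥ 0` whenever `f ≥ 0`, which is invariant under
left translation. -/
def IsAmenable (G : Type*) [Group G] : Prop :=
  ∃ m : lp (fun _ : G => ℝ) ∞ →ₗ[ℝ] ℝ,
    m 1 = 1 ∧
    (∀ f : lp (fun _ : G => ℝ) ∞, (∀ x, 0 ≤ f x) → 0 ≤ m f) ∧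
    ∀ (g : G) (f : lp (fun _ : G => ℝ) ∞),
      m ⟨fun x => f (g⁻¹ * x), translate_memℓp g f⟩ = m f

section helper

variable {G : Type*} [Group G]

lemma translate_memℓp2 (g : G) (β : lp (fun _ : G => ℂ) 2) :
    Memℓp (fun x => β (g⁻¹ * x)) 2 := by
  apply memℓp_gen
  have h : Summable fun x : G => ‖β x‖ ^ (2 : ℝ≥0∞).toReal :=
    (lp.memℓp β).summable (by norm_num)
  exact ((Equiv.mulLeft g⁻¹).summable_iff
    (f := fun x : G => ‖β x‖ ^ (2 : ℝ≥0∞).toReal)).2 h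

/-- Left translation as a linear endomorphism of `ℓ²(G)`. -/
noncomputable def transL (g : G) : lp (fun _ : G => ℂ) 2 →ₗ[ℂ] lp (fun _ : G => ℂ) 2 where
  toFun β := ⟨fun x => β (g⁻¹ * x), translate_memℓp2 g β⟩
  map_add' β γ := by
    apply lp.ext
    funext x
    simp [lp.coeFn_add]; rfl
  map_smul' c β := by
    apply lp.ext
    funext x
    simp [lp.coeFn_smul]

@[simp] lemma transL_apply (g : G) (β : lp (fun _ : G => ℂ) 2) (x : G) :
    (transL g β : G → ℂ) x = β (g⁻¹ * x) := rfl

/-- Left translation as a monoid hom into endomorphisms. -/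
noncomputable def transHom : G →* Module.End ℂ (lp (fun _ : G => ℂ) 2) where
  toFun := transL
  map_one' := by
    apply LinearMap.ext; intro β; apply lp.ext; funext x; simp
  map_mul' g h := by
    apply LinearMap.ext; intro β; apply lp.ext; funext x
    show β ((g * h)⁻¹ * x) = β (h⁻¹ * (g⁻¹ * x))
    rw [mul_inv_rev, mul_assoc]

/-- The action of `ℂG` on `ℓ²(G)` as an algebra hom. -/
noncomputable def Phi : MonoidAlgebra ℂ G →ₐ[ℂ] Module.End ℂ (lp (fun _ : G => ℂ) 2) :=
  MonoidAlgebra.lift ℂ _ G transHom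

lemma Phi_apply (α : MonoidAlgebra ℂ G) (β : lp (fun _ : G => ℂ) 2) :
    Phi α β = ∑ g ∈ α.coeff.support, α.coeff g • transL g β := by
  rw [Phi, MonoidAlgebra.lift_apply]
  rw [Finsupp.sum]
  simp [LinearMap.sum_apply]
  rfl

lemma smulL2_eq (α : MonoidAlgebra ℂ G) (β : lp (fun _ : G => ℂ) 2) :
    smulL2 α β = ⇑(Phi α β) := by
  funext x
  rw [Phi_apply, smulL2]
  rw [lp.coeFn_sum, Finset.sum_apply]
  refine Finset.sum_congr rfl fun g _ => ?_
  rw [lp.coeFn_smul, Pi.smul_apply, transL_apply, smul_eq_mul]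

lemma Phi_adj_apply (α : MonoidAlgebra ℂ G) (γ : lp (fun _ : G => ℂ) 2) :
    Phi (MonoidAlgebra.adj α) γ = ∑ g ∈ α.coeff.support, (starRingEnd ℂ) (α.coeff g) • transL g⁻¹ γ := by
  rw [Phi, MonoidAlgebra.lift_apply, MonoidAlgebra.adj, MonoidAlgebra.coeff_ofCoeff]
  rw [Finsupp.sum_mapRange_index (fun _ => by simp)]
  rw [Finsupp.sum_equivMapDomain]
  rw [Finsupp.sum]
  simp only [LinearMap.coe_sum, Finset.sum_apply, LinearMap.smul_apply]
  rfl

lemma inner_transL (g : G) (β γ : lp (fun _ : G => ℂ) 2) :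
    ⟪transL g β, γ⟫_ℂ = ⟪β, transL g⁻¹ γ⟫_ℂ := by
  rw [lp.inner_eq_tsum, lp.inner_eq_tsum]
  rw [← (Equiv.mulLeft g).tsum_eq]
  refine tsum_congr fun y => ?_
  simp [RCLike.inner_apply]

lemma inner_Phi (α : MonoidAlgebra ℂ G) (β γ : lp (fun _ : G => ℂ) 2) :
    ⟪Phi α β, γ⟫_ℂ = ⟪β, Phi (MonoidAlgebra.adj α) γ⟫_ℂ := by
  rw [Phi_apply, Phi_adj_apply, sum_inner, inner_sum]
  refine Finset.sum_congr rfl fun g _ => ?_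
  rw [inner_smul_left, inner_smul_right, inner_transL]

end helper

/-- `α ∈ ℂG` is an analytical zero divisor iff `α*α` is. -/
theorem stmt_9 {G : Type*} [Group G] (α : MonoidAlgebra ℂ G) :
    (∃ β : lp (fun _ : G => ℂ) 2, β ≠ 0 ∧ smulL2 α β = 0) ↔
      (∃ β : lp (fun _ : G => ℂ) 2, β ≠ 0 ∧ smulL2 (MonoidAlgebra.adj α * α) β = 0) := by
  constructor
  · rintro ⟨β, hβ, h0⟩
    refine ⟨β, hβ, ?_⟩
    have hΦ : Phi α β = 0 := lp.ext (by rw [← smulL2_eq, h0, lp.coeFn_zero])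
    rw [smulL2_eq, map_mul]
    show ⇑(Phi (MonoidAlgebra.adj α) (Phi α β)) = 0
    rw [hΦ, map_zero, lp.coeFn_zero]
  · rintro ⟨β, hβ, h0⟩
    refine ⟨β, hβ, ?_⟩
    have hΦ : Phi (MonoidAlgebra.adj α * α) β = 0 :=
      lp.ext (by rw [← smulL2_eq, h0, lp.coeFn_zero])
    have hinner : ⟪Phi α β, Phi α β⟫_ℂ = 0 := by
      rw [inner_Phi]
      have : Phi (MonoidAlgebra.adj α) (Phi α β) = Phi (MonoidAlgebra.adj α * α) β := by
        rw [map_mul]; rfl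
      rw [this, hΦ, inner_zero_right]
    have : Phi α β = 0 := inner_self_eq_zero.1 hinner
    rw [smulL2_eq, this, lp.coeFn_zero]
end

section
/- Let G be a group and let α = ∑_{g∈G} a_g·g ∈ ℂG be self-adjoint. Then α admits the decomposition α = Υ(α)·1 + (1/2)·∑_{g ∈ supp α, g ≠ 1} |a_g| · v_g* v_g, where for each g ≠ 1 in the support of α, v_g = (conj(a_g)/|a_g|)·1 + g ∈ ℂG, and the sum is the finite sum over the nonidentity elements of the support of α. -/
open scoped ENNReal

lemma adj_apply' {G : Type*} [Group G] (α : MonoidAlgebra ℂ G) (x : G) :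
    (MonoidAlgebra.adj α).coeff x = starRingEnd ℂ (α.coeff x⁻¹) := rfl

lemma adj_single' {G : Type*} [Group G] [DecidableEq G] (h : G) (a : ℂ) :
    MonoidAlgebra.adj (MonoidAlgebra.single h a) = MonoidAlgebra.single h⁻¹ (starRingEnd ℂ a) := by
  ext x
  rw [adj_apply']
  simp [MonoidAlgebra.coeff_single, Finsupp.single_apply, apply_ite (starRingEnd ℂ), inv_eq_iff_eq_inv]

lemma adj_add' {G : Type*} [Group G] (x y : MonoidAlgebra ℂ G) :
    MonoidAlgebra.adj (x + y) = MonoidAlgebra.adj x + MonoidAlgebra.adj y := by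
  classical
  ext t; rw [MonoidAlgebra.coeff_add, Finsupp.add_apply, adj_apply', adj_apply', adj_apply', MonoidAlgebra.coeff_add, Finsupp.add_apply, map_add]

lemma key' {G : Type*} [Group G] [DecidableEq G] (g : G) (a : ℂ) (ha : a ≠ 0) :
    ((‖a‖ : ℂ)) •
      (MonoidAlgebra.adj
          ((starRingEnd ℂ a / ‖a‖) • (1 : MonoidAlgebra ℂ G) +
            MonoidAlgebra.of ℂ G g) *
        ((starRingEnd ℂ a / ‖a‖) • (1 : MonoidAlgebra ℂ G) +
          MonoidAlgebra.of ℂ G g))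
    = MonoidAlgebra.single (1 : G) (2 * (‖a‖ : ℂ)) +
        (MonoidAlgebra.single g a + MonoidAlgebra.single g⁻¹ (starRingEnd ℂ a)) := by
  set r : ℂ := (‖a‖ : ℂ) with hr
  have hrne : r ≠ 0 := by
    simpa [hr] using (norm_ne_zero_iff.2 ha)
  set c : ℂ := starRingEnd ℂ a / r with hc
  have h1 : c • (1 : MonoidAlgebra ℂ G) = MonoidAlgebra.single 1 c := by
    simp [MonoidAlgebra.one_def, MonoidAlgebra.smul_single']
  have hconjc : starRingEnd ℂ c = a / r := by
    rw [hc, map_div₀, Complex.conj_conj, hr, Complex.conj_ofReal]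
  have hmc : a * starRingEnd ℂ a = r * r := by
    rw [Complex.mul_conj, hr, Complex.normSq_eq_norm_sq]
    norm_cast
    ring
  rw [h1, MonoidAlgebra.of_apply, adj_add', adj_single', adj_single', inv_one, map_one,
    hconjc]
  rw [add_mul, mul_add, mul_add, MonoidAlgebra.single_mul_single,
    MonoidAlgebra.single_mul_single, MonoidAlgebra.single_mul_single,
    MonoidAlgebra.single_mul_single]
  rw [one_mul, one_mul, mul_one, mul_one, inv_mul_cancel]
  rw [smul_add, smul_add, smul_add, MonoidAlgebra.smul_single', MonoidAlgebra.smul_single',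
    MonoidAlgebra.smul_single', MonoidAlgebra.smul_single']
  have e1 : r * (a / r * c) = r := by
    rw [hc, div_mul_div_comm, hmc, div_self (mul_ne_zero hrne hrne), mul_one]
  have e2 : r * (a / r) = a := by field_simp
  have e3 : r * (1 * c) = starRingEnd ℂ a := by rw [hc]; field_simp
  have e4 : r * (1 * 1) = r := by ring
  rw [e1, e2, e3, e4, two_mul, MonoidAlgebra.single_add]
  abel

/-- Every self-adjoint `α ∈ ℂG` decomposes as
`α = Υ(α)·1 + (1/2)·∑_{1 ≠ g ∈ supp α} |a_g| · v_g* v_g`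
where `v_g = (conj(a_g)/|a_g|)·1 + g`. -/
theorem stmt_14 {G : Type*} [Group G] [DecidableEq G] (α : MonoidAlgebra ℂ G)
    (hsa : MonoidAlgebra.adj α = α) :
    α = ((Upsilon α : ℂ)) • (1 : MonoidAlgebra ℂ G) +
        (1 / 2 : ℂ) • ∑ g ∈ α.coeff.support.erase 1,
          ((‖α.coeff g‖ : ℂ)) •
            (MonoidAlgebra.adj
                ((starRingEnd ℂ (α.coeff g) / ‖α.coeff g‖) • (1 : MonoidAlgebra ℂ G) +
                  MonoidAlgebra.of ℂ G g) *
              ((starRingEnd ℂ (α.coeff g) / ‖α.coeff g‖) • (1 : MonoidAlgebra ℂ G) +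
                MonoidAlgebra.of ℂ G g)) := by
  have hself : ∀ x : G, α.coeff x = starRingEnd ℂ (α.coeff x⁻¹) := by
    intro x
    conv_lhs => rw [← hsa]
    exact adj_apply' α x
  have hterm : ∀ g ∈ α.coeff.support.erase 1,
      ((‖α.coeff g‖ : ℂ)) •
        (MonoidAlgebra.adj
            ((starRingEnd ℂ (α.coeff g) / ‖α.coeff g‖) • (1 : MonoidAlgebra ℂ G) +
              MonoidAlgebra.of ℂ G g) *
          ((starRingEnd ℂ (α.coeff g) / ‖α.coeff g‖) • (1 : MonoidAlgebra ℂ G) +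
            MonoidAlgebra.of ℂ G g))
      = MonoidAlgebra.single (1 : G) (2 * (‖α.coeff g‖ : ℂ)) +
          (MonoidAlgebra.single g (α.coeff g) + MonoidAlgebra.single g⁻¹ (starRingEnd ℂ (α.coeff g))) := by
    intro g hg
    exact key' g (α.coeff g) (Finsupp.mem_support_iff.1 (Finset.mem_of_mem_erase hg))
  rw [Finset.sum_congr rfl hterm, Finset.sum_add_distrib, Finset.sum_add_distrib]
  -- reindex third sum
  have hreidx : ∑ g ∈ α.coeff.support.erase 1, MonoidAlgebra.single g⁻¹ (starRingEnd ℂ (α.coeff g))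
      = ∑ g ∈ α.coeff.support.erase 1, MonoidAlgebra.single g (α.coeff g) := by
    refine Finset.sum_nbij' (i := fun g => g⁻¹) (j := fun g => g⁻¹) ?_ ?_ ?_ ?_ ?_
    · intro g hg
      rw [Finset.mem_erase, Finsupp.mem_support_iff] at hg ⊢
      refine ⟨inv_ne_one.2 hg.1, ?_⟩
      rw [hself g⁻¹, inv_inv]
      simpa using hg.2
    · intro g hg
      rw [Finset.mem_erase, Finsupp.mem_support_iff] at hg ⊢
      refine ⟨inv_ne_one.2 hg.1, ?_⟩
      rw [hself g⁻¹, inv_inv]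
      simpa using hg.2
    · intro g _; exact inv_inv g
    · intro g _; exact inv_inv g
    · intro g hg
      rw [hself g⁻¹, inv_inv]
  rw [hreidx]
  -- collapse first sum
  rw [show ∑ x ∈ α.coeff.support.erase 1, MonoidAlgebra.single (1:G) (2 * (‖α.coeff x‖ : ℂ))
      = MonoidAlgebra.single 1 (∑ x ∈ α.coeff.support.erase 1, 2 * (‖α.coeff x‖ : ℂ)) from
    (map_sum (MonoidAlgebra.singleAddHom (1:G)) _ _).symm]
  have hTT : ∀ (s : ℂ) (T : MonoidAlgebra ℂ G),
      (1/2 : ℂ) • (MonoidAlgebra.single (1:G) s + (T + T))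
        = MonoidAlgebra.single (1:G) ((1/2 : ℂ) * s) + T := by
    intro s T
    rw [smul_add, MonoidAlgebra.smul_single', smul_add, ← add_smul]
    norm_num
  rw [hTT]
  -- Upsilon • 1 = single 1 Υ
  have hU : ((Upsilon α : ℂ)) • (1 : MonoidAlgebra ℂ G) = MonoidAlgebra.single (1:G) ((Upsilon α : ℂ)) := by
    simp [MonoidAlgebra.one_def, MonoidAlgebra.smul_single']
  rw [hU]
  have hhalf : (1/2 : ℂ) * (∑ g ∈ α.coeff.support.erase 1, 2 * (‖α.coeff g‖ : ℂ))
      = ∑ g ∈ α.coeff.support.erase 1, (‖α.coeff g‖ : ℂ) := by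
    rw [Finset.mul_sum]; congr 1; ext g; ring
  rw [hhalf]
  rw [← add_assoc, ← MonoidAlgebra.single_add]
  have hU2 : (Upsilon α : ℂ) + ∑ g ∈ α.coeff.support.erase 1, (‖α.coeff g‖ : ℂ) = α.coeff 1 := by
    rw [Upsilon]
    push_cast
    have h1 : ((α.coeff 1).re : ℂ) = α.coeff 1 := by
      have := hself 1
      rw [inv_one] at this
      exact Complex.conj_eq_iff_re.1 this.symm
    rw [h1]; ring
  rw [hU2]
  -- final: α = single 1 (α 1) + ∑ erase
  by_cases h1 : (1:G) ∈ α.coeff.support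
  · conv_lhs => rw [← MonoidAlgebra.sum_coeff_single α]
    rw [Finsupp.sum, ← Finset.add_sum_erase _ _ h1]
  · rw [Finset.erase_eq_of_notMem h1, Finsupp.notMem_support_iff.1 h1,
      MonoidAlgebra.single_zero, zero_add]
    conv_lhs => rw [← MonoidAlgebra.sum_coeff_single α]
    rfl
end
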